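/- arXiv:solv-int/9902011 — 2 statements merged into one kernel-verified Lean document; each statement's English description precedes it below -/
import Mathlib

section
/- With the s-dependent orthogonal family setup, define κ_n(s)² := 2πi/h_n(s), B_n(s) := −p_{n+1}(0,s)/p_n(0,s) and, for n ≥ 1, C_n(s) := B_n(s)·h_n(s)/h_{n−1}(s), and assume the recursion z·(p_n(z,s) + C_n(s) p_{n−1}(z,s)) = p_{n+1}(z,s) + B_n(s) p_n(z,s) holds for all n ≥ 1 and s > 0. Then for every n ≥ 1 and s > 0 with κ_n(s)² ≠ κ_{n−1}(s)²: C_n(s) = −(κ_{n−1}(s)²/(2 κ_n(s)²)) · (d/ds κ_n(s)²)/(κ_n(s)² − κ_{n−1}(s)²). -/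
noncomputable section
open Polynomial Complex Finset Metric intervalIntegral

namespace S15

/-- the integrand after parametrizing the circle -/
def g (s : ℝ) (m : ℤ) (θ : ℝ) : ℂ :=
  I * Complex.exp ((m : ℂ) * (θ * I)) *
    Complex.exp ((s : ℂ) * (Complex.exp (θ * I) + Complex.exp (-(θ * I))))

/-- moments -/
def Mm (s : ℝ) (m : ℤ) : ℂ := ∫ θ in (0:ℝ)..(2 * Real.pi), g s m θ

lemma g_cont (s : ℝ) (m : ℤ) : Continuous (g s m) := by
  unfold g; fun_prop

lemma circle_eq (f : ℂ → ℂ) : (∮ z in C(0, 1), f z) =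
    ∫ θ in (0:ℝ)..(2 * Real.pi), (Complex.exp (θ * I) * I) * f (Complex.exp (θ * I)) := by
  simp [circleIntegral, deriv_circleMap, circleMap, smul_eq_mul]

lemma Mm_symm (s : ℝ) (m : ℤ) : Mm s m = Mm s (-m) := by
  have h1 : (∫ θ in (0:ℝ)..(2 * Real.pi), g s m (2 * Real.pi - θ)) = Mm s m := by
    rw [intervalIntegral.integral_comp_sub_left (g s m) (2 * Real.pi)]
    simp [Mm]
  rw [← h1, Mm]
  apply intervalIntegral.integral_congr
  intro θ _
  unfold g
  push_cast
  congr 1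
  · congr 1
    rw [show ((m:ℂ) * ((2*(Real.pi:ℂ) - θ)*I)) = (m:ℂ)*(2*Real.pi*I) + (-(m:ℂ))*((θ:ℂ)*I) by
      ring, Complex.exp_add, Complex.exp_int_mul_two_pi_mul_I m, one_mul]
  · congr 1
    have h3 : Complex.exp ((2*(Real.pi:ℂ) - θ)*I) = Complex.exp (-(θ*I)) := by
      rw [show ((2*(Real.pi:ℂ) - θ)*I) = 2*Real.pi*I + -(θ*I) by ring, Complex.exp_add]
      simp [Complex.exp_two_pi_mul_I]
    have h4 : Complex.exp (-((2*(Real.pi:ℂ) - θ)*I)) = Complex.exp (θ*I) := by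
      rw [show (-((2*(Real.pi:ℂ) - θ)*I)) = -(2*Real.pi*I) + θ*I by ring, Complex.exp_add]
      simp [Complex.exp_neg, Complex.exp_two_pi_mul_I]
    rw [h3, h4]; ring


lemma zpow_exp (θ : ℝ) (m : ℤ) :
    Complex.exp ((θ:ℂ) * I) ^ m = Complex.exp ((m : ℂ) * ((θ:ℂ) * I)) :=
  (Complex.exp_int_mul _ m).symm

lemma exp_sum (s : ℝ) (q r : Polynomial ℂ) (A B : ℕ) (hq : q.natDegree < A)
    (hr : r.natDegree < B) :
    (∮ z in C(0, 1), q.eval z * r.eval z⁻¹ * Complex.exp ((s:ℂ) * (z + z⁻¹)) / z)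
      = ∑ j ∈ range A, ∑ k ∈ range B,
          q.coeff j * r.coeff k * Mm s ((j : ℤ) - (k : ℤ)) := by
  rw [circle_eq]
  have key : ∀ θ : ℝ, (Complex.exp ((θ:ℂ) * I) * I) *
      (q.eval (Complex.exp ((θ:ℂ) * I)) * r.eval (Complex.exp ((θ:ℂ) * I))⁻¹ *
        Complex.exp ((s:ℂ) * (Complex.exp ((θ:ℂ) * I) + (Complex.exp ((θ:ℂ) * I))⁻¹)) /
          Complex.exp ((θ:ℂ) * I))
      = ∑ j ∈ range A, ∑ k ∈ range B,
          q.coeff j * r.coeff k * g s ((j : ℤ) - (k : ℤ)) θ := by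
    intro θ
    set z := Complex.exp ((θ:ℂ) * I) with hzdef
    have hz : z ≠ 0 := Complex.exp_ne_zero _
    rw [Polynomial.eval_eq_sum_range' hq, Polynomial.eval_eq_sum_range' hr,
      Finset.sum_mul_sum]
    rw [Finset.sum_mul, Finset.sum_div, Finset.mul_sum]
    refine Finset.sum_congr rfl fun j _ => ?_
    rw [Finset.sum_mul, Finset.sum_div, Finset.mul_sum]
    refine Finset.sum_congr rfl fun k _ => ?_
    have hzp : Complex.exp ((((j : ℤ) - (k : ℤ) : ℤ) : ℂ) * ((θ:ℂ) * I))
        = z ^ (j : ℕ) * (z⁻¹) ^ (k : ℕ) := by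
      rw [← zpow_exp θ ((j : ℤ) - (k : ℤ)), zpow_sub₀ hz, zpow_natCast, zpow_natCast,
        div_eq_mul_inv, inv_pow]
    unfold g
    rw [show Complex.exp (-((θ:ℂ) * I)) = z⁻¹ by rw [Complex.exp_neg], hzp]
    push_cast
    field_simp
    rw [show Complex.exp (I * (θ:ℂ)) = z by rw [hzdef, mul_comm]]
    ring
  rw [intervalIntegral.integral_congr (fun θ _ => key θ)]
  rw [intervalIntegral.integral_finset_sum]
  · refine Finset.sum_congr rfl fun j _ => ?_
    rw [intervalIntegral.integral_finset_sum]
    · refine Finset.sum_congr rfl fun k _ => ?_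
      rw [intervalIntegral.integral_const_mul]
      rfl
    · intro k _
      exact (continuous_const.mul (g_cont s _)).intervalIntegrable _ _
  · intro j _
    exact (continuous_finset_sum _ fun k _ =>
      continuous_const.mul (g_cont s _)).intervalIntegrable _ _


lemma g_split (s : ℝ) (m : ℤ) (θ : ℝ) :
    (Complex.exp ((θ:ℂ) * I) + Complex.exp (-((θ:ℂ) * I))) * g s m θ
      = g s (m + 1) θ + g s (m - 1) θ := by
  unfold g
  have h1 : Complex.exp (((m + 1 : ℤ) : ℂ) * ((θ:ℂ) * I))
      = Complex.exp ((m : ℂ) * ((θ:ℂ) * I)) * Complex.exp ((θ:ℂ) * I) := by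
    rw [← Complex.exp_add]; push_cast; ring_nf
  have h2 : Complex.exp (((m - 1 : ℤ) : ℂ) * ((θ:ℂ) * I))
      = Complex.exp ((m : ℂ) * ((θ:ℂ) * I)) * Complex.exp (-((θ:ℂ) * I)) := by
    rw [← Complex.exp_add]; push_cast; ring_nf
  rw [h1, h2]; ring

lemma norm_g_le (t : ℝ) (m : ℤ) (θ : ℝ) : ‖g t m θ‖ ≤ Real.exp (2 * |t|) := by
  unfold g
  have e1 : ‖(Complex.exp ((m : ℂ) * ((θ:ℂ) * I)))‖ = 1 := by
    rw [show (m : ℂ) * ((θ:ℂ) * I) = ((m * θ : ℝ) : ℂ) * I by push_cast; ring]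
    exact Complex.norm_exp_ofReal_mul_I _
  have e2 : ‖(Complex.exp ((t : ℂ) *
      (Complex.exp ((θ:ℂ) * I) + Complex.exp (-((θ:ℂ) * I)))))‖ ≤ Real.exp (2 * |t|) := by
    rw [Complex.norm_exp]
    apply Real.exp_le_exp.mpr
    have hre : ((t : ℂ) * (Complex.exp ((θ:ℂ) * I) + Complex.exp (-((θ:ℂ) * I)))).re
        ≤ |((t : ℂ) * (Complex.exp ((θ:ℂ) * I) + Complex.exp (-((θ:ℂ) * I)))).re| :=
      le_abs_self _
    refine hre.trans ?_
    refine (Complex.abs_re_le_norm _).trans ?_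
    rw [norm_mul, Complex.norm_real, Real.norm_eq_abs]
    have : ‖(Complex.exp ((θ:ℂ) * I) + Complex.exp (-((θ:ℂ) * I)))‖ ≤ 2 := by
      refine (norm_add_le _ _).trans ?_
      rw [show -((θ:ℂ) * I) = ((-θ : ℝ) : ℂ) * I by push_cast; ring]
      rw [show (θ:ℂ) * I = ((θ : ℝ) : ℂ) * I by push_cast; ring]
      rw [Complex.norm_exp_ofReal_mul_I, Complex.norm_exp_ofReal_mul_I]
      norm_num
    calc |t| * ‖_‖ ≤ |t| * 2 := by
          exact mul_le_mul_of_nonneg_left this (abs_nonneg t)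
      _ = 2 * |t| := by ring
  calc ‖I * Complex.exp ((m : ℂ) * ((θ:ℂ) * I)) * Complex.exp ((t : ℂ) *
        (Complex.exp ((θ:ℂ) * I) + Complex.exp (-((θ:ℂ) * I))))‖
      = ‖I‖ * ‖(Complex.exp ((m : ℂ) * ((θ:ℂ) * I)))‖ *
        ‖(Complex.exp ((t : ℂ) *
          (Complex.exp ((θ:ℂ) * I) + Complex.exp (-((θ:ℂ) * I)))))‖ := by
        rw [norm_mul, norm_mul]
    _ ≤ Real.exp (2 * |t|) := by
        rw [Complex.norm_I, e1, one_mul, one_mul]; exact e2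

lemma g_hasDeriv (m : ℤ) (θ : ℝ) (t : ℝ) :
    HasDerivAt (fun u : ℝ => g u m θ)
      ((Complex.exp ((θ:ℂ) * I) + Complex.exp (-((θ:ℂ) * I))) * g t m θ) t := by
  set w : ℂ := Complex.exp ((θ:ℂ) * I) + Complex.exp (-((θ:ℂ) * I)) with hw
  have h1 : HasDerivAt (fun z : ℂ => Complex.exp (z * w))
      (Complex.exp ((t : ℂ) * w) * w) (t : ℂ) := by
    simpa using ((hasDerivAt_id (t : ℂ)).mul_const w).cexp
  have h2 : HasDerivAt (fun u : ℝ => Complex.exp ((u : ℂ) * w))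
      (Complex.exp ((t : ℂ) * w) * w) t := h1.comp_ofReal
  have h3 := h2.const_mul (I * Complex.exp ((m : ℂ) * ((θ:ℂ) * I)))
  unfold g
  rw [hw] at h3 ⊢
  exact h3.congr_deriv (by ring)

lemma Mm_hasDeriv (m : ℤ) (s : ℝ) :
    HasDerivAt (fun t => Mm t m) (Mm s (m + 1) + Mm s (m - 1)) s := by
  have contw : Continuous fun θ : ℝ =>
      Complex.exp ((θ:ℂ) * I) + Complex.exp (-((θ:ℂ) * I)) := by fun_prop
  have bint : IntervalIntegrable (fun _ : ℝ => 2 * Real.exp (2 * (|s| + 1)))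
      MeasureTheory.volume 0 (2 * Real.pi) := continuous_const.intervalIntegrable _ _
  have key := (intervalIntegral.hasDerivAt_integral_of_dominated_loc_of_deriv_le
    (F := fun t θ => g t m θ)
    (F' := fun t θ => (Complex.exp ((θ:ℂ) * I) + Complex.exp (-((θ:ℂ) * I))) * g t m θ)
    (x₀ := s) (a := (0:ℝ)) (b := 2 * Real.pi)
    (bound := fun _ => 2 * Real.exp (2 * (|s| + 1))) (Metric.ball_mem_nhds s one_pos)
    (Filter.Eventually.of_forall fun t => (g_cont t m).aestronglyMeasurable)
    ((g_cont s m).intervalIntegrable _ _)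
    (contw.mul (g_cont s m)).aestronglyMeasurable
    (Filter.Eventually.of_forall fun θ _ t ht => ?_)
    bint
    (Filter.Eventually.of_forall fun θ _ t _ => g_hasDeriv m θ t)).2
  · have : (∫ θ in (0:ℝ)..(2 * Real.pi),
        (Complex.exp ((θ:ℂ) * I) + Complex.exp (-((θ:ℂ) * I))) * g s m θ)
        = Mm s (m + 1) + Mm s (m - 1) := by
      rw [intervalIntegral.integral_congr (g := fun θ => g s (m+1) θ + g s (m-1) θ)
        (fun θ _ => g_split s m θ)]
      rw [intervalIntegral.integral_add ((g_cont s _).intervalIntegrable _ _)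
        ((g_cont s _).intervalIntegrable _ _)]
      rfl
    rw [this] at key
    exact key
  · have h1 : ‖(Complex.exp ((θ:ℂ) * I) + Complex.exp (-((θ:ℂ) * I)))‖ ≤ 2 := by
      refine (norm_add_le _ _).trans ?_
      rw [show -((θ:ℂ) * I) = ((-θ : ℝ) : ℂ) * I by push_cast; ring]
      rw [show (θ:ℂ) * I = ((θ : ℝ) : ℂ) * I by norm_num]
      rw [Complex.norm_exp_ofReal_mul_I, Complex.norm_exp_ofReal_mul_I]
      norm_num
    have h2 : ‖g t m θ‖ ≤ Real.exp (2 * (|s| + 1)) := by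
      refine (norm_g_le t m θ).trans ?_
      apply Real.exp_le_exp.mpr
      have : |t| ≤ |s| + 1 := by
        have := mem_ball_iff_norm.mp ht
        rw [Real.norm_eq_abs] at this
        have := abs_sub_abs_le_abs_sub t s
        nlinarith [abs_nonneg (t - s), abs_nonneg t, abs_nonneg s,
          (mem_ball_iff_norm.mp ht)]
      linarith
    calc ‖_ * g t m θ‖ = ‖_‖ * ‖g t m θ‖ := norm_mul _ _
      _ ≤ 2 * Real.exp (2 * (|s| + 1)) := by
          apply mul_le_mul h1 h2 (norm_nonneg _) (by norm_num)


def Ssum (s : ℝ) (q r : Polynomial ℂ) (A B : ℕ) : ℂ :=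
  ∑ j ∈ range A, ∑ k ∈ range B, q.coeff j * r.coeff k * Mm s ((j : ℤ) - (k : ℤ))

lemma Ssum_eq_circle (s : ℝ) (q r : Polynomial ℂ) (A B : ℕ) (hq : q.natDegree < A)
    (hr : r.natDegree < B) : Ssum s q r A B =
      ∮ z in C(0, 1), q.eval z * r.eval z⁻¹ * Complex.exp ((s:ℂ) * (z + z⁻¹)) / z := by
  unfold Ssum; exact (exp_sum s q r A B hq hr).symm

lemma Ssum_add_left (s : ℝ) (q₁ q₂ r : Polynomial ℂ) (A B : ℕ) :
    Ssum s (q₁ + q₂) r A B = Ssum s q₁ r A B + Ssum s q₂ r A B := by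
  simp [Ssum, Polynomial.coeff_add, add_mul, Finset.sum_add_distrib]

lemma Ssum_Cmul_left (s : ℝ) (a : ℂ) (q r : Polynomial ℂ) (A B : ℕ) :
    Ssum s (Polynomial.C a * q) r A B = a * Ssum s q r A B := by
  simp [Ssum, Polynomial.coeff_C_mul, Finset.mul_sum, mul_assoc]

lemma Ssum_zero_left (s : ℝ) (r : Polynomial ℂ) (A B : ℕ) : Ssum s 0 r A B = 0 := by
  simp [Ssum]

lemma Ssum_ext_left (s : ℝ) (q r : Polynomial ℂ) (A A' B : ℕ)
    (hq : ∀ j, A ≤ j → q.coeff j = 0) (hAA : A ≤ A') :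
    Ssum s q r A' B = Ssum s q r A B := by
  unfold Ssum
  refine (Finset.sum_subset (Finset.range_subset_range.mpr hAA) fun j _ hj => ?_).symm
  have : A ≤ j := by simpa using hj
  simp [hq j this]

lemma Ssum_symm (s : ℝ) (q r : Polynomial ℂ) (A B : ℕ) :
    Ssum s q r A B = Ssum s r q B A := by
  unfold Ssum
  rw [Finset.sum_comm]
  refine Finset.sum_congr rfl fun k _ => Finset.sum_congr rfl fun j _ => ?_
  rw [Mm_symm, neg_sub]
  ring

section Orth

variable (p : ℕ → ℝ → Polynomial ℂ) (s : ℝ)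
variable (hmonic : ∀ n t, 0 < t → (p n t).Monic)
variable (hdeg : ∀ n t, 0 < t → (p n t).natDegree = n)
variable (horth : ∀ (n m : ℕ) (t : ℝ), 0 < t → n ≠ m →
      (∮ z in C(0, 1), (p n t).eval z * (p m t).eval z⁻¹ *
        Complex.exp ((t:ℝ) * (z + z⁻¹)) / z) = 0)
variable (hs : 0 < s)

include hdeg horth hs in
lemma orth_pd {d n A B : ℕ} (hdn : d ≠ n) (hA : d < A) (hB : n < B) :
    Ssum s (p d s) (p n s) A B = 0 := by
  rw [Ssum_eq_circle s _ _ A B (by rw [hdeg d s hs]; exact hA) (by rw [hdeg n s hs]; exact hB)]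
  exact horth d n s hs hdn

include hmonic hdeg horth hs in
lemma orth_left {n A B : ℕ} (hB : n < B) :
    ∀ d : ℕ, ∀ q : Polynomial ℂ, q.natDegree ≤ d → q.natDegree < A →
      (∀ k, n ≤ k → q.coeff k = 0) → Ssum s q (p n s) A B = 0 := by
  intro d
  induction d using Nat.strong_induction_on with
  | _ d IH =>
    intro q hqd hqA hcoef
    by_cases hq0 : q = 0
    · simp [Ssum, hq0]
    have hen : q.natDegree < n := by
      by_contra hle
      refine Polynomial.leadingCoeff_ne_zero.mpr hq0 ?_
      rw [← Polynomial.coeff_natDegree]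
      exact hcoef _ (not_lt.mp hle)
    set e := q.natDegree with he
    have hpe := hmonic e s hs
    have hpedeg := hdeg e s hs
    have hpecoeff : (p e s).coeff e = 1 := by
      have := hpe.coeff_natDegree
      rwa [hpedeg] at this
    set q' := q - Polynomial.C (q.coeff e) * p e s with hq'
    have hq'coeff : ∀ j, e ≤ j → q'.coeff j = 0 := by
      intro j hj
      rcases eq_or_lt_of_le hj with rfl | hlt
      · simp [hq', Polynomial.coeff_C_mul, hpecoeff]
      · have h1 : q.coeff j = 0 := Polynomial.coeff_eq_zero_of_natDegree_lt (he ▸ hlt)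
        have h2 : (p e s).coeff j = 0 :=
          Polynomial.coeff_eq_zero_of_natDegree_lt (by rw [hpedeg]; exact hlt)
        simp [hq', Polynomial.coeff_C_mul, h1, h2]
    have hsplit : q = Polynomial.C (q.coeff e) * p e s + q' := by rw [hq']; ring
    rw [hsplit, Ssum_add_left, Ssum_Cmul_left]
    have h1 : Ssum s (p e s) (p n s) A B = 0 :=
      orth_pd p s hdeg horth hs hen.ne hqA hB
    have h2 : Ssum s q' (p n s) A B = 0 := by
      by_cases hq'0 : q' = 0
      · rw [hq'0]; exact Ssum_zero_left s _ A B
      · have hd' : q'.natDegree < e := by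
          by_contra hle
          refine Polynomial.leadingCoeff_ne_zero.mpr hq'0 ?_
          rw [← Polynomial.coeff_natDegree]
          exact hq'coeff _ (not_lt.mp hle)
        refine IH q'.natDegree (lt_of_lt_of_le hd' hqd) q' le_rfl
          (hd'.trans hqA) fun k hk => ?_
        exact hq'coeff k (le_of_lt (lt_of_lt_of_le hen hk))
    rw [h1, h2]
    ring

include hmonic hdeg horth hs in
lemma orth_right {n A B : ℕ} (hA : n < A) (q : Polynomial ℂ) (hqB : q.natDegree < B)
    (hcoef : ∀ k, n ≤ k → q.coeff k = 0) : Ssum s (p n s) q A B = 0 := by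
  rw [Ssum_symm]
  have horth' : ∀ (n m : ℕ) (t : ℝ), 0 < t → n ≠ m →
      (∮ z in C(0, 1), (p n t).eval z * (p m t).eval z⁻¹ *
        Complex.exp ((t:ℝ) * (z + z⁻¹)) / z) = 0 := horth
  exact orth_left p s hmonic hdeg horth' hs hA q.natDegree q le_rfl hqB hcoef

end Orth

lemma final_alg (B a b w : ℂ) (ha : a ≠ 0) (hb : b ≠ 0) (hw : w ≠ 0) (hab : a ≠ b) :
    B * a / b = -((w/b) / (2*(w/a))) * (((0*a - w*(2*(B - B*a/b)*a))/a^2) / (w/a - w/b)) := by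
  have h1 : w/a - w/b = w*(b-a)/(a*b) := by field_simp
  rw [h1]
  have hba : b - a ≠ 0 := sub_ne_zero.mpr (fun e => hab e.symm)
  field_simp
  ring

end S15
end


open Polynomial
open S15

/-- Lemma 6 (iii): `C_n = −(κ_{n−1}²/(2κ_n²))·(κ_n²)′/(κ_n² − κ_{n−1}²)`. -/
theorem stmt_15
    (p : ℕ → ℝ → Polynomial ℂ)
    (hmonic : ∀ n s, 0 < s → (p n s).Monic)
    (hdeg : ∀ n s, 0 < s → (p n s).natDegree = n)
    (hreal : ∀ n s, 0 < s → ∀ k, ((p n s).coeff k).im = 0)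
    (hp0 : ∀ n s, 0 < s → (p n s).coeff 0 ≠ 0)
    (horth : ∀ (n m : ℕ) (s : ℝ), 0 < s → n ≠ m →
      (∮ z in C(0, 1), (p n s).eval z * (p m s).eval z⁻¹ *
        Complex.exp (s * (z + z⁻¹)) / z) = 0)
    (h : ℕ → ℝ → ℂ)
    (hh : ∀ (n : ℕ) (s : ℝ), 0 < s → h n s =
      ∮ z in C(0, 1), (p n s).eval z * (p n s).eval z⁻¹ *
        Complex.exp (s * (z + z⁻¹)) / z)
    (hne : ∀ (n : ℕ) (s : ℝ), 0 < s → h n s ≠ 0)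
    (hcoeffdiff : ∀ (n k : ℕ), k ≤ n →
      DifferentiableOn ℝ (fun s => (p n s).coeff k) (Set.Ioi (0 : ℝ)))
    (κsq : ℕ → ℝ → ℂ)
    (hκ : ∀ (n : ℕ) (s : ℝ), κsq n s = 2 * Real.pi * Complex.I / h n s)
    (Bn Cn : ℕ → ℝ → ℂ)
    (hB : ∀ (n : ℕ) (s : ℝ), 0 < s → Bn n s = -((p (n + 1) s).coeff 0 / (p n s).coeff 0))
    (hC : ∀ (n : ℕ) (s : ℝ), 1 ≤ n → 0 < s → Cn n s = Bn n s * h n s / h (n - 1) s)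
    (hrec : ∀ (n : ℕ) (s : ℝ), 1 ≤ n → 0 < s →
      Polynomial.X * (p n s + Polynomial.C (Cn n s) * p (n - 1) s) =
        p (n + 1) s + Polynomial.C (Bn n s) * p n s)
    (n : ℕ) (s : ℝ) (hn : 1 ≤ n) (hs : 0 < s)
    (hk : κsq n s ≠ κsq (n - 1) s) :
    Cn n s = -(κsq (n - 1) s / (2 * κsq n s)) *
      (deriv (κsq n) s / (κsq n s - κsq (n - 1) s)) := by
  have hπ : (2 * (Real.pi : ℂ) * Complex.I) ≠ 0 := by
    simp [Real.pi_ne_zero, Complex.I_ne_zero]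
  have hane : h n s ≠ 0 := hne n s hs
  have hbne : h (n - 1) s ≠ 0 := hne (n - 1) s hs
  have hdn : (p n s).natDegree = n := hdeg n s hs
  have hcd : ∀ j : ℕ, j ≤ n → HasDerivAt (fun t => (p n t).coeff j)
      (deriv (fun t => (p n t).coeff j) s) s := fun j hj =>
    ((hcoeffdiff n j hj).differentiableAt (Ioi_mem_nhds hs)).hasDerivAt
  have cdn0 : deriv (fun t => (p n t).coeff n) s = 0 := by
    have hev : (fun t => (p n t).coeff n) =ᶠ[nhds s] fun _ => (1 : ℂ) := by
      filter_upwards [Ioi_mem_nhds hs] with t ht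
      have h1 := (hmonic n t ht).coeff_natDegree
      rwa [hdeg n t ht] at h1
    rw [hev.deriv_eq, deriv_const]
  -- the derivative of h n
  have hFder : HasDerivAt (fun t => Ssum t (p n t) (p n t) (n+1) (n+1))
      (∑ j ∈ Finset.range (n+1), ∑ k ∈ Finset.range (n+1),
        (deriv (fun t => (p n t).coeff j) s * (p n s).coeff k * Mm s ((j:ℤ) - k)
          + (p n s).coeff j * deriv (fun t => (p n t).coeff k) s * Mm s ((j:ℤ) - k)
          + (p n s).coeff j * (p n s).coeff k *
              (Mm s ((j:ℤ) - k + 1) + Mm s ((j:ℤ) - k - 1)))) s := by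
    unfold Ssum
    apply HasDerivAt.fun_sum
    intro j hj
    apply HasDerivAt.fun_sum
    intro k hk
    have h1 := hcd j (Nat.lt_succ_iff.mp (Finset.mem_range.mp hj))
    have h2 := hcd k (Nat.lt_succ_iff.mp (Finset.mem_range.mp hk))
    have h3 := Mm_hasDeriv ((j:ℤ) - k) s
    have h4 := (h1.fun_mul h2).fun_mul h3
    exact h4.congr_deriv (by ring)
  have hFh : h n =ᶠ[nhds s] fun t => Ssum t (p n t) (p n t) (n+1) (n+1) := by
    filter_upwards [Ioi_mem_nhds hs] with t ht
    rw [hh n t ht, Ssum_eq_circle t _ _ (n+1) (n+1) (by rw [hdeg n t ht]; omega)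
      (by rw [hdeg n t ht]; omega)]
  have hDh : HasDerivAt (h n)
      (∑ j ∈ Finset.range (n+1), ∑ k ∈ Finset.range (n+1),
        (deriv (fun t => (p n t).coeff j) s * (p n s).coeff k * Mm s ((j:ℤ) - k)
          + (p n s).coeff j * deriv (fun t => (p n t).coeff k) s * Mm s ((j:ℤ) - k)
          + (p n s).coeff j * (p n s).coeff k *
              (Mm s ((j:ℤ) - k + 1) + Mm s ((j:ℤ) - k - 1)))) s :=
    hFder.congr_of_eventuallyEq hFh
  -- the polynomial of derivatives of coefficients
  set dp : Polynomial ℂ :=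
    ∑ j ∈ Finset.range (n+1), Polynomial.C (deriv (fun t => (p n t).coeff j) s)
      * Polynomial.X ^ j with hdpdef
  have hdpcoeff : ∀ k, dp.coeff k
      = if k < n + 1 then deriv (fun t => (p n t).coeff k) s else 0 := by
    intro k
    rw [hdpdef, Polynomial.finset_sum_coeff]
    simp only [Polynomial.coeff_C_mul, Polynomial.coeff_X_pow, mul_ite, mul_one, mul_zero]
    rw [Finset.sum_ite_eq (Finset.range (n+1)) k fun j => deriv (fun t => (p n t).coeff j) s]
    simp [Finset.mem_range]
  have hdpcond : ∀ k, n ≤ k → dp.coeff k = 0 := by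
    intro k hkn
    rw [hdpcoeff k]
    rcases eq_or_lt_of_le hkn with rfl | hlt
    · simpa using cdn0
    · rw [if_neg (by omega)]
  have hdpdeg : dp.natDegree ≤ n :=
    Polynomial.natDegree_le_iff_coeff_eq_zero.mpr fun m hm => hdpcond m hm.le
  -- first two pieces vanish
  have hD1 : (∑ j ∈ Finset.range (n+1), ∑ k ∈ Finset.range (n+1),
      deriv (fun t => (p n t).coeff j) s * (p n s).coeff k * Mm s ((j:ℤ) - k)) = 0 := by
    have e1 : (∑ j ∈ Finset.range (n+1), ∑ k ∈ Finset.range (n+1),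
        deriv (fun t => (p n t).coeff j) s * (p n s).coeff k * Mm s ((j:ℤ) - k))
        = Ssum s dp (p n s) (n+1) (n+1) := by
      unfold Ssum
      refine Finset.sum_congr rfl fun j hj => Finset.sum_congr rfl fun k hk => ?_
      rw [hdpcoeff j, if_pos (Finset.mem_range.mp hj)]
    rw [e1]
    exact orth_left p s hmonic hdeg horth hs (Nat.lt_succ_self n) dp.natDegree dp le_rfl
      (by omega) hdpcond
  have hD2 : (∑ j ∈ Finset.range (n+1), ∑ k ∈ Finset.range (n+1),
      (p n s).coeff j * deriv (fun t => (p n t).coeff k) s * Mm s ((j:ℤ) - k)) = 0 := by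
    have e1 : (∑ j ∈ Finset.range (n+1), ∑ k ∈ Finset.range (n+1),
        (p n s).coeff j * deriv (fun t => (p n t).coeff k) s * Mm s ((j:ℤ) - k))
        = Ssum s (p n s) dp (n+1) (n+1) := by
      unfold Ssum
      refine Finset.sum_congr rfl fun j hj => Finset.sum_congr rfl fun k hk => ?_
      rw [hdpcoeff k, if_pos (Finset.mem_range.mp hk)]
    rw [e1]
    exact orth_right p s hmonic hdeg horth hs (Nat.lt_succ_self n) dp (by omega) hdpcond
  -- symmetric pieces
  have hT2eq : (∑ j ∈ Finset.range (n+1), ∑ k ∈ Finset.range (n+1),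
      (p n s).coeff j * (p n s).coeff k * Mm s ((j:ℤ) - k - 1))
      = ∑ j ∈ Finset.range (n+1), ∑ k ∈ Finset.range (n+1),
        (p n s).coeff j * (p n s).coeff k * Mm s ((j:ℤ) - k + 1) := by
    rw [Finset.sum_comm]
    refine Finset.sum_congr rfl fun a _ => Finset.sum_congr rfl fun b _ => ?_
    rw [Mm_symm, show -((b:ℤ) - a - 1) = (a:ℤ) - b + 1 by ring]
    ring
  have hT1 : Ssum s (Polynomial.X * p n s) (p n s) (n+2) (n+1)
      = ∑ j ∈ Finset.range (n+1), ∑ k ∈ Finset.range (n+1),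
        (p n s).coeff j * (p n s).coeff k * Mm s ((j:ℤ) - k + 1) := by
    unfold Ssum
    rw [Finset.sum_range_succ' _ (n+1)]
    have hc0 : (Polynomial.X * p n s).coeff 0 = 0 := by
      simp [Polynomial.mul_coeff_zero]
    simp only [hc0, zero_mul, Finset.sum_const_zero, add_zero, Polynomial.coeff_X_mul]
    refine Finset.sum_congr rfl fun j _ => Finset.sum_congr rfl fun k _ => ?_
    congr 2
    push_cast
    ring
  have hrecX : Polynomial.X * p n s = p (n+1) s + Polynomial.C (Bn n s) * p n s
      + Polynomial.C (-(Cn n s)) * (Polynomial.X * p (n-1) s) := by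
    have h0 := hrec n s hn hs
    rw [map_neg]
    linear_combination h0
  have e2 : Ssum s (p n s) (p n s) (n+2) (n+1) = h n s := by
    rw [Ssum_ext_left s (p n s) (p n s) (n+1) (n+2) (n+1)
      (fun j hj => Polynomial.coeff_eq_zero_of_natDegree_lt (by rw [hdn]; omega)) (by omega)]
    rw [Ssum_eq_circle s _ _ (n+1) (n+1) (by rw [hdn]; omega) (by rw [hdn]; omega)]
    exact (hh n s hs).symm
  have hE : Ssum s (Polynomial.X * p n s) (p n s) (n+2) (n+1)
      = (Bn n s - Cn n s) * h n s := by
    rw [hrecX, Ssum_add_left, Ssum_add_left, Ssum_Cmul_left, Ssum_Cmul_left]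
    have e1 : Ssum s (p (n+1) s) (p n s) (n+2) (n+1) = 0 :=
      orth_pd p s hdeg horth hs (by omega) (by omega) (by omega)
    have e3 : Ssum s (Polynomial.X * p (n-1) s) (p n s) (n+2) (n+1) = h n s := by
      have hq : Polynomial.X * p (n-1) s
          = p n s + (Polynomial.X * p (n-1) s - p n s) := by ring
      rw [hq, Ssum_add_left, e2]
      have hqc : ∀ k, n ≤ k → (Polynomial.X * p (n-1) s - p n s).coeff k = 0 := by
        intro k hkn
        obtain ⟨k', rfl⟩ : ∃ k', k = k' + 1 := ⟨k - 1, by omega⟩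
        rw [Polynomial.coeff_sub, Polynomial.coeff_X_mul]
        rcases eq_or_lt_of_le hkn with heq | hlt
        · have hmc : (p (n-1) s).coeff k' = 1 := by
            rw [show k' = n - 1 by omega]
            have h1 := (hmonic (n-1) s hs).coeff_natDegree
            rwa [hdeg (n-1) s hs] at h1
          have hmc2 : (p n s).coeff (k'+1) = 1 := by
            rw [show k' + 1 = n by omega]
            have h1 := (hmonic n s hs).coeff_natDegree
            rwa [hdn] at h1
          rw [hmc, hmc2, sub_self]
        · have h1 : (p (n-1) s).coeff k' = 0 :=
            Polynomial.coeff_eq_zero_of_natDegree_lt (by rw [hdeg (n-1) s hs]; omega)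
          have h2 : (p n s).coeff (k'+1) = 0 :=
            Polynomial.coeff_eq_zero_of_natDegree_lt (by rw [hdn]; omega)
          rw [h1, h2, sub_self]
      have hqd : (Polynomial.X * p (n-1) s - p n s).natDegree ≤ n :=
        Polynomial.natDegree_le_iff_coeff_eq_zero.mpr fun m hm => hqc m hm.le
      rw [orth_left p s hmonic hdeg horth hs (Nat.lt_succ_self n) _ _ le_rfl
        (by omega) hqc, add_zero]
    rw [e1, e2, e3]
    ring
  -- so the derivative of h n equals 2 (Bn - Cn) h n
  have hDval : HasDerivAt (h n) (2 * (Bn n s - Cn n s) * h n s) s := by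
    convert hDh using 1
    rw [show (∑ j ∈ Finset.range (n+1), ∑ k ∈ Finset.range (n+1),
        (deriv (fun t => (p n t).coeff j) s * (p n s).coeff k * Mm s ((j:ℤ) - k)
          + (p n s).coeff j * deriv (fun t => (p n t).coeff k) s * Mm s ((j:ℤ) - k)
          + (p n s).coeff j * (p n s).coeff k *
              (Mm s ((j:ℤ) - k + 1) + Mm s ((j:ℤ) - k - 1))))
      = (∑ j ∈ Finset.range (n+1), ∑ k ∈ Finset.range (n+1),
          deriv (fun t => (p n t).coeff j) s * (p n s).coeff k * Mm s ((j:ℤ) - k))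
        + (∑ j ∈ Finset.range (n+1), ∑ k ∈ Finset.range (n+1),
          (p n s).coeff j * deriv (fun t => (p n t).coeff k) s * Mm s ((j:ℤ) - k))
        + ((∑ j ∈ Finset.range (n+1), ∑ k ∈ Finset.range (n+1),
          (p n s).coeff j * (p n s).coeff k * Mm s ((j:ℤ) - k + 1))
          + ∑ j ∈ Finset.range (n+1), ∑ k ∈ Finset.range (n+1),
          (p n s).coeff j * (p n s).coeff k * Mm s ((j:ℤ) - k - 1)) by
        simp [Finset.sum_add_distrib, mul_add]]
    rw [hD1, hD2, hT2eq, ← hT1, hE]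
    ring
  -- derivative of κsq n
  have hκfun : κsq n = fun t => 2 * (Real.pi:ℂ) * Complex.I / h n t :=
    funext fun t => hκ n t
  have hders : HasDerivAt (κsq n)
      ((0 * h n s - (2 * (Real.pi:ℂ) * Complex.I) * (2 * (Bn n s - Cn n s) * h n s))
        / (h n s)^2) s := by
    rw [hκfun]
    exact (hasDerivAt_const s _).div hDval hane
  have hderiv : deriv (κsq n) s
      = (0 * h n s - (2 * (Real.pi:ℂ) * Complex.I) * (2 * (Bn n s - Cn n s) * h n s))
        / (h n s)^2 := hders.deriv
  have hab : h n s ≠ h (n - 1) s := fun e => hk (by rw [hκ n s, hκ (n-1) s, e])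
  rw [hC n s hn hs] at hderiv ⊢
  rw [hderiv, hκ n s, hκ (n-1) s]
  exact final_alg (Bn n s) (h n s) (h (n-1) s) (2 * (Real.pi:ℂ) * Complex.I)
    hane hbne hπ hab
end

section
/- With the fixed-s orthogonal family setup, for every n ≥ 2 one has ((n+1)/s)·(B_n − C_n) + h_n/h_{n−1} − 1 − C_{n+1}·(B_n − C_n) + (B_n − C_n)² = 0. -/
open Polynomial

open Polynomial Complex Metric intervalIntegral

noncomputable def EE (s : ℝ) (z : ℂ) : ℂ := Complex.exp (s * (z + z⁻¹))

lemma EE_inv (s : ℝ) (z : ℂ) : EE s z⁻¹ = EE s z := by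
  simp [EE, inv_inv, add_comm]

lemma contOn_EE (s : ℝ) : ContinuousOn (EE s) {(0:ℂ)}ᶜ := by
  apply Complex.continuous_exp.comp_continuousOn
  exact (continuous_const.continuousOn.mul (continuous_id.continuousOn.add
    (continuousOn_inv₀.mono (by intro z hz; simpa using hz))))

lemma circleIntegrable_of_contOn {F : ℂ → ℂ} (hF : ContinuousOn F {(0:ℂ)}ᶜ) :
    CircleIntegrable F 0 1 := by
  apply ContinuousOn.circleIntegrable (by norm_num)
  exact hF.mono (by intro z hz; simp at hz ⊢; intro h0; rw [h0] at hz; norm_num at hz)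

/-- integral of a derivative over the circle vanishes -/
lemma circleIntegral_deriv_eq_zero {F F' : ℂ → ℂ}
    (hd : ∀ z : ℂ, z ≠ 0 → HasDerivAt F (F' z) z)
    (hc : ContinuousOn F' {(0:ℂ)}ᶜ) :
    (∮ z in C(0, 1), F' z) = 0 := by
  have key : ∀ θ : ℝ, HasDerivAt (fun t : ℝ => F (circleMap 0 1 t))
      (circleMap 0 1 θ * I * F' (circleMap 0 1 θ)) θ := by
    intro θ
    have h1 : HasDerivAt (circleMap 0 1) (circleMap 0 1 θ * I) θ := by
      simpa using hasDerivAt_circleMap 0 1 θ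
    have h2 : HasDerivAt F (F' (circleMap 0 1 θ)) (circleMap 0 1 θ) := by
      apply hd; simp only [circleMap]; simpa using Complex.exp_ne_zero (↑θ * I)
    have h3 := h2.comp θ h1
    rw [show circleMap 0 1 θ * I * F' (circleMap 0 1 θ) = F' (circleMap 0 1 θ) * (circleMap 0 1 θ * I) by ring]
    exact h3
  have hcont : ContinuousOn (fun θ : ℝ => circleMap 0 1 θ * I * F' (circleMap 0 1 θ))
      (Set.uIcc 0 (2 * Real.pi)) := by
    apply Continuous.continuousOn ?_ |>.mul ?_
    · exact (continuous_circleMap 0 1).mul continuous_const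
    · apply Continuous.continuousOn
      apply hc.comp_continuous (continuous_circleMap 0 1)
      intro θ; simp only [circleMap, Set.mem_compl_iff, Set.mem_singleton_iff]
      simpa using Complex.exp_ne_zero (↑θ * I)
  have := intervalIntegral.integral_eq_sub_of_hasDerivAt
    (f := fun t : ℝ => F (circleMap 0 1 t)) (fun θ _ => key θ)
    (hcont.intervalIntegrable)
  rw [circleIntegral]
  simp only [deriv_circleMap, smul_eq_mul]
  rw [this]
  simp [circleMap, Complex.exp_ne_zero]

/-- substitution z → z⁻¹ in ∮ G z / z over the unit circle -/
lemma circleIntegral_inv_symm (G : ℂ → ℂ) :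
    (∮ z in C(0, 1), G z⁻¹ / z) = ∮ z in C(0, 1), G z / z := by
  have e1 : ∀ θ : ℝ, circleMap 0 1 θ = Complex.exp (θ * I) := by
    intro θ; simp [circleMap]
  have key : ∀ θ : ℝ, deriv (circleMap 0 1) θ • (G (circleMap 0 1 θ)⁻¹ / circleMap 0 1 θ)
      = I * G (Complex.exp (-(θ : ℝ) * I)) := by
    intro θ
    rw [deriv_circleMap, e1, ← Complex.exp_neg]
    have := Complex.exp_ne_zero ((θ : ℝ) * I)
    field_simp
    ring_nf
    rw [mul_inv_cancel_right₀ this]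
  have key2 : ∀ θ : ℝ, deriv (circleMap 0 1) θ • (G (circleMap 0 1 θ) / circleMap 0 1 θ)
      = I * G (Complex.exp ((θ : ℝ) * I)) := by
    intro θ
    rw [deriv_circleMap, e1]
    have := Complex.exp_ne_zero ((θ : ℝ) * I)
    field_simp
    ring_nf
    rw [mul_inv_cancel_right₀ this]
  rw [circleIntegral, circleIntegral]
  simp only [key, key2]
  rw [intervalIntegral.integral_const_mul, intervalIntegral.integral_const_mul]
  congr 1
  have c1 : (∫ θ in (0:ℝ)..(2*Real.pi), G (Complex.exp (-(θ:ℝ) * I)))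
      = ∫ θ in (-(2*Real.pi))..(-(0:ℝ)), G (Complex.exp ((θ:ℝ) * I)) := by
    rw [← intervalIntegral.integral_comp_neg (fun θ : ℝ => G (Complex.exp ((θ:ℝ) * I)))]
    congr 1; ext θ; push_cast; ring_nf
  rw [c1]
  have c2 : (∫ θ in (-(2*Real.pi))..(-(0:ℝ)), G (Complex.exp ((θ:ℝ) * I)))
      = ∫ θ in (-(2*Real.pi))..(-(0:ℝ)), G (Complex.exp (((θ + 2*Real.pi):ℝ) * I)) := by
    apply intervalIntegral.integral_congr
    intro θ _
    have : Complex.exp (((θ + 2*Real.pi):ℝ) * I) = Complex.exp ((θ:ℝ) * I) := by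
      push_cast
      rw [add_mul, Complex.exp_add]
      rw [show (2:ℂ) * ↑Real.pi * I = 2 * ↑Real.pi * I from rfl, Complex.exp_two_pi_mul_I, mul_one]
    simp only []
    rw [this]
  rw [c2]
  rw [intervalIntegral.integral_comp_add_right (fun θ : ℝ => G (Complex.exp ((θ:ℝ) * I))) (2*Real.pi)]
  norm_num

noncomputable def Jf (s : ℝ) (f g : Polynomial ℂ) : ℂ :=
  ∮ z in C(0, 1), f.eval z * g.eval z⁻¹ * EE s z / z

lemma contOn_Jf (s : ℝ) (f g : Polynomial ℂ) :
    ContinuousOn (fun z : ℂ => f.eval z * g.eval z⁻¹ * EE s z / z) {(0:ℂ)}ᶜ := by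
  have hinv : ContinuousOn (fun z : ℂ => z⁻¹) {(0:ℂ)}ᶜ :=
    continuousOn_inv₀.mono (by intro z hz; simpa using hz)
  exact (((f.continuous_aeval.continuousOn.mul
    (g.continuous_aeval.comp_continuousOn hinv)).mul (contOn_EE s)).mul hinv).congr
    (by intro z hz; simp [div_eq_mul_inv])

lemma Jf_integrable (s : ℝ) (f g : Polynomial ℂ) :
    CircleIntegrable (fun z : ℂ => f.eval z * g.eval z⁻¹ * EE s z / z) 0 1 :=
  circleIntegrable_of_contOn (contOn_Jf s f g)

lemma cI_add {f g : ℂ → ℂ} (hf : CircleIntegrable f 0 1) (hg : CircleIntegrable g 0 1) :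
    (∮ z in C(0, 1), (f z + g z)) = (∮ z in C(0, 1), f z) + ∮ z in C(0, 1), g z := by
  simp only [circleIntegral, smul_add, intervalIntegral.integral_add hf.out hg.out]

lemma Jf_add_left (s : ℝ) (f₁ f₂ g : Polynomial ℂ) :
    Jf s (f₁ + f₂) g = Jf s f₁ g + Jf s f₂ g := by
  have : Jf s (f₁ + f₂) g = ∮ z in C(0, 1),
      (f₁.eval z * g.eval z⁻¹ * EE s z / z + f₂.eval z * g.eval z⁻¹ * EE s z / z) := by
    unfold Jf; congr 1; funext z; rw [eval_add]; ring
  rw [this, cI_add (Jf_integrable s f₁ g) (Jf_integrable s f₂ g)]; rfl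

lemma Jf_Cmul_left (s : ℝ) (c : ℂ) (f g : Polynomial ℂ) :
    Jf s (Polynomial.C c * f) g = c * Jf s f g := by
  have : Jf s (Polynomial.C c * f) g = ∮ z in C(0, 1),
      c * (f.eval z * g.eval z⁻¹ * EE s z / z) := by
    unfold Jf; congr 1; funext z; rw [eval_mul, eval_C]; ring
  rw [this, circleIntegral.integral_const_mul]; rfl

lemma Jf_symm (s : ℝ) (f g : Polynomial ℂ) : Jf s f g = Jf s g f := by
  have : Jf s f g = ∮ z in C(0, 1),
      (fun w : ℂ => g.eval w * f.eval w⁻¹ * EE s w) z⁻¹ / z := by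
    unfold Jf; congr 1; funext z; simp only [inv_inv, EE_inv]; ring
  rw [this, circleIntegral_inv_symm (fun w : ℂ => g.eval w * f.eval w⁻¹ * EE s w)]; rfl

lemma Jf_coeff (s : ℝ) (p : ℕ → Polynomial ℂ)
    (hmonic : ∀ n, (p n).Monic) (hdeg : ∀ n, (p n).natDegree = n)
    (horth : ∀ n m, n ≠ m → Jf s (p n) (p m) = 0)
    (h : ℕ → ℂ) (hh : ∀ n, h n = Jf s (p n) (p n)) (n : ℕ) :
    ∀ m, m ≤ n → ∀ q : Polynomial ℂ, q.natDegree ≤ m → Jf s q (p n) = q.coeff n * h n := by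
  intro m
  induction m with
  | zero =>
    intro _ q hq
    have hq0 : q = Polynomial.C (q.coeff 0) := (Polynomial.eq_C_of_natDegree_le_zero hq)
    have hp0 : p 0 = 1 := (Polynomial.Monic.natDegree_eq_zero (hmonic 0)).mp (hdeg 0)
    have h1 : Jf s q (p n) = q.coeff 0 * Jf s (p 0) (p n) := by
      conv_lhs => rw [hq0,
        show Polynomial.C (q.coeff 0) = Polynomial.C (q.coeff 0) * p 0 by rw [hp0, mul_one]]
      rw [Jf_Cmul_left]
    by_cases hn : n = 0
    · subst hn; rw [h1, ← hh 0]
    · rw [h1, horth 0 n (Ne.symm hn), Polynomial.coeff_eq_zero_of_natDegree_lt (p := q) (n := n)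
        (lt_of_le_of_lt hq (Nat.pos_of_ne_zero hn))]
      ring
  | succ m ih =>
    intro hmn q hq
    set c := q.coeff (m+1) with hc
    set r := q - Polynomial.C c * p (m+1) with hr
    have hlead : (p (m+1)).coeff (m+1) = 1 := by
      have := (hmonic (m+1)).coeff_natDegree; rwa [hdeg] at this
    have hrdeg : r.natDegree ≤ m := by
      rw [Polynomial.natDegree_le_iff_coeff_eq_zero]
      intro k hk
      rw [hr, Polynomial.coeff_sub, Polynomial.coeff_C_mul]
      rcases Nat.lt_or_ge (m+1) k with hk2 | hk2
      · rw [Polynomial.coeff_eq_zero_of_natDegree_lt (lt_of_le_of_lt hq hk2),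
          Polynomial.coeff_eq_zero_of_natDegree_lt (by rw [hdeg]; exact hk2)]
        ring
      · have : k = m + 1 := by omega
        subst this; rw [hlead, ← hc]; ring
    have hqsplit : q = Polynomial.C c * p (m+1) + r := by rw [hr]; ring
    rw [hqsplit, Jf_add_left, Jf_Cmul_left, ih (by omega) r hrdeg]
    rw [Polynomial.coeff_add, Polynomial.coeff_C_mul]
    rcases Nat.lt_or_ge (m+1) n with hcase | hcase
    · rw [horth (m+1) n (by omega),
        Polynomial.coeff_eq_zero_of_natDegree_lt (p := p (m+1)) (by rw [hdeg]; exact hcase)]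
      ring
    · have : m + 1 = n := by omega
      subst this
      rw [← hh, hlead]
      ring

lemma contOn_Jf_flip (s : ℝ) (f g : Polynomial ℂ) :
    ContinuousOn (fun z : ℂ => f.eval z⁻¹ * g.eval z * EE s z / z) {(0:ℂ)}ᶜ := by
  have hinv : ContinuousOn (fun z : ℂ => z⁻¹) {(0:ℂ)}ᶜ :=
    continuousOn_inv₀.mono (by intro z hz; simpa using hz)
  exact ((((f.continuous_aeval.comp_continuousOn hinv).mul
    g.continuous_aeval.continuousOn).mul (contOn_EE s)).mul hinv).congr
    (by intro z hz; simp [div_eq_mul_inv])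

lemma Jf_flip_integral (s : ℝ) (f g : Polynomial ℂ) :
    (∮ z in C(0,1), f.eval z⁻¹ * g.eval z * EE s z / z) = Jf s f g := by
  have heq : (fun z : ℂ => f.eval z⁻¹ * g.eval z * EE s z / z)
      = fun z => (fun w => f.eval w * g.eval w⁻¹ * EE s w) z⁻¹ / z := by
    funext z; simp only [inv_inv, EE_inv]
  rw [heq, circleIntegral_inv_symm (fun w => f.eval w * g.eval w⁻¹ * EE s w)]; rfl

lemma cI_cmul (c : ℂ) (f : ℂ → ℂ) :
    (∮ z in C(0,1), c * f z) = c * ∮ z in C(0,1), f z :=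
  circleIntegral.integral_const_mul c f 0 1

lemma CircleIntegrable.cmul {f : ℂ → ℂ} (c : ℂ) (hf : CircleIntegrable f 0 1) :
    CircleIntegrable (fun z => c * f z) 0 1 := by
  have : IntervalIntegrable (fun θ : ℝ => c * f (circleMap 0 1 θ))
      MeasureTheory.volume 0 (2 * Real.pi) := hf.const_mul c
  exact this

lemma cI_add4 {f1 f2 f3 f4 : ℂ → ℂ} (h1 : CircleIntegrable f1 0 1)
    (h2 : CircleIntegrable f2 0 1) (h3 : CircleIntegrable f3 0 1)
    (h4 : CircleIntegrable f4 0 1) :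
    (∮ z in C(0,1), (f1 z + (f2 z + (f3 z + f4 z))))
      = (∮ z in C(0,1), f1 z) + ((∮ z in C(0,1), f2 z)
        + ((∮ z in C(0,1), f3 z) + (∮ z in C(0,1), f4 z))) := by
  simp only [circleIntegral, smul_add]
  rw [intervalIntegral.integral_add h1.out ((h2.out).add ((h3.out).add h4.out)),
    intervalIntegral.integral_add h2.out ((h3.out).add h4.out),
    intervalIntegral.integral_add h3.out h4.out]

lemma Agen (s : ℝ) (P Q : Polynomial ℂ) :
    Jf s (Polynomial.X * P.derivative) Q - Jf s (Polynomial.X * Q.derivative) P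
      + s * Jf s (Polynomial.X * P) Q - s * Jf s (Polynomial.X * Q) P = 0 := by
  set F : ℂ → ℂ := fun z => P.eval z * Q.eval z⁻¹ * EE s z with hF
  set F' : ℂ → ℂ := fun z =>
    (P.derivative.eval z * Q.eval z⁻¹ + P.eval z * (Q.derivative.eval z⁻¹ * (-(z^2)⁻¹))) * EE s z
    + P.eval z * Q.eval z⁻¹ * (EE s z * (s * (1 + -(z^2)⁻¹))) with hF'
  have hd : ∀ z : ℂ, z ≠ 0 → HasDerivAt F (F' z) z := by
    intro z hz
    have hP : HasDerivAt (fun w : ℂ => P.eval w) (P.derivative.eval z) z := P.hasDerivAt z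
    have hQi : HasDerivAt (fun w : ℂ => Q.eval w⁻¹)
        (Q.derivative.eval z⁻¹ * (-(z^2)⁻¹)) z :=
      HasDerivAt.comp z (Q.hasDerivAt z⁻¹) (hasDerivAt_inv hz)
    have hu : HasDerivAt (fun w : ℂ => (s:ℂ) * (w + w⁻¹)) ((s:ℂ) * (1 + -(z^2)⁻¹)) z :=
      HasDerivAt.const_mul _ ((hasDerivAt_id z).add (hasDerivAt_inv hz))
    have hE : HasDerivAt (EE s) (EE s z * ((s:ℂ) * (1 + -(z^2)⁻¹))) z := hu.cexp
    exact (hP.mul hQi).mul hE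
  have hc : ContinuousOn F' {(0:ℂ)}ᶜ := by
    have hinv : ContinuousOn (fun z : ℂ => z⁻¹) {(0:ℂ)}ᶜ :=
      continuousOn_inv₀.mono (by intro z hz; simpa using hz)
    have hinv2 : ContinuousOn (fun z : ℂ => (z^2)⁻¹) {(0:ℂ)}ᶜ := by
      apply ContinuousOn.inv₀ (continuous_pow 2).continuousOn
      intro z hz; exact pow_ne_zero _ (by simpa using hz)
    have hQc : ContinuousOn (fun z : ℂ => Q.eval z⁻¹) {(0:ℂ)}ᶜ :=
      Q.continuous_aeval.comp_continuousOn hinv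
    have hQd : ContinuousOn (fun z : ℂ => Q.derivative.eval z⁻¹) {(0:ℂ)}ᶜ :=
      Q.derivative.continuous_aeval.comp_continuousOn hinv
    exact ((P.derivative.continuous_aeval.continuousOn.mul hQc |>.add
      (P.continuous_aeval.continuousOn.mul (hQd.mul hinv2.neg))).mul (contOn_EE s)).add
      ((P.continuous_aeval.continuousOn.mul hQc).mul
        ((contOn_EE s).mul (continuousOn_const.mul (continuousOn_const.add hinv2.neg))))
  have hzero := circleIntegral_deriv_eq_zero hd hc
  have hsplit : (∮ z in C(0,1), F' z) = ∮ z in C(0,1),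
      ((Polynomial.X * P.derivative).eval z * Q.eval z⁻¹ * EE s z / z
      + ((-1 : ℂ) * ((Polynomial.X * Q.derivative).eval z⁻¹ * P.eval z * EE s z / z)
      + ((s : ℂ) * ((Polynomial.X * P).eval z * Q.eval z⁻¹ * EE s z / z)
      + (-(s : ℂ)) * ((Polynomial.X * Q).eval z⁻¹ * P.eval z * EE s z / z)))) := by
    apply circleIntegral.integral_congr (by norm_num)
    intro z hz
    have hz0 : z ≠ 0 := by
      intro h0; rw [h0] at hz; simp at hz
    have hA : ∀ a b c : ℂ, z * a * b * c / z = a * b * c := by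
      intro a b c; field_simp
    have hB : ∀ a b c : ℂ, z⁻¹ * a * b * c / z = a * b * c * (z^2)⁻¹ := by
      intro a b c; rw [div_eq_mul_inv, sq, mul_inv]; ring
    simp only [hF', Polynomial.eval_mul, Polynomial.eval_X]
    rw [hA, hA, hB, hB]
    ring
  rw [hsplit] at hzero
  have i1 : CircleIntegrable (fun z : ℂ =>
      (Polynomial.X * P.derivative).eval z * Q.eval z⁻¹ * EE s z / z) 0 1 :=
    Jf_integrable s _ Q
  have i2 : CircleIntegrable (fun z : ℂ =>
      (-1 : ℂ) * ((Polynomial.X * Q.derivative).eval z⁻¹ * P.eval z * EE s z / z)) 0 1 :=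
    CircleIntegrable.cmul _ (circleIntegrable_of_contOn (contOn_Jf_flip s _ P))
  have i3 : CircleIntegrable (fun z : ℂ =>
      (s : ℂ) * ((Polynomial.X * P).eval z * Q.eval z⁻¹ * EE s z / z)) 0 1 :=
    CircleIntegrable.cmul _ (Jf_integrable s _ Q)
  have i4 : CircleIntegrable (fun z : ℂ =>
      (-(s : ℂ)) * ((Polynomial.X * Q).eval z⁻¹ * P.eval z * EE s z / z)) 0 1 :=
    CircleIntegrable.cmul _ (circleIntegrable_of_contOn (contOn_Jf_flip s _ P))
  rw [cI_add4 i1 i2 i3 i4, cI_cmul, cI_cmul, cI_cmul,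
    Jf_flip_integral s (Polynomial.X * Q.derivative) P,
    Jf_flip_integral s (Polynomial.X * Q) P] at hzero
  have e1 : (∮ z in C(0,1),
      (Polynomial.X * P.derivative).eval z * Q.eval z⁻¹ * EE s z / z)
      = Jf s (Polynomial.X * P.derivative) Q := rfl
  have e3 : (∮ z in C(0,1), (Polynomial.X * P).eval z * Q.eval z⁻¹ * EE s z / z)
      = Jf s (Polynomial.X * P) Q := rfl
  rw [e1, e3] at hzero
  linear_combination hzero

lemma cI_add5 {f1 f2 f3 f4 f5 : ℂ → ℂ} (h1 : CircleIntegrable f1 0 1)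
    (h2 : CircleIntegrable f2 0 1) (h3 : CircleIntegrable f3 0 1)
    (h4 : CircleIntegrable f4 0 1) (h5 : CircleIntegrable f5 0 1) :
    (∮ z in C(0,1), (f1 z + (f2 z + (f3 z + (f4 z + f5 z)))))
      = (∮ z in C(0,1), f1 z) + ((∮ z in C(0,1), f2 z)
        + ((∮ z in C(0,1), f3 z) + ((∮ z in C(0,1), f4 z) + (∮ z in C(0,1), f5 z)))) := by
  simp only [circleIntegral, smul_add]
  rw [intervalIntegral.integral_add h1.out ((h2.out).add ((h3.out).add ((h4.out).add h5.out))),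
    intervalIntegral.integral_add h2.out ((h3.out).add ((h4.out).add h5.out)),
    intervalIntegral.integral_add h3.out ((h4.out).add h5.out),
    intervalIntegral.integral_add h4.out h5.out]

lemma Dgen (s : ℝ) (P Q : Polynomial ℂ) :
    Jf s P.derivative Q - Jf s (Polynomial.X^2 * Q.derivative) P + s * Jf s P Q
      - s * Jf s (Polynomial.X^2 * Q) P - Jf s (Polynomial.X * Q) P = 0 := by
  set F : ℂ → ℂ := fun z => P.eval z * Q.eval z⁻¹ * EE s z * z⁻¹ with hF
  set F' : ℂ → ℂ := fun z =>
    ((P.derivative.eval z * Q.eval z⁻¹ + P.eval z * (Q.derivative.eval z⁻¹ * (-(z^2)⁻¹))) * EE s z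
      + P.eval z * Q.eval z⁻¹ * (EE s z * (s * (1 + -(z^2)⁻¹)))) * z⁻¹
    + P.eval z * Q.eval z⁻¹ * EE s z * (-(z^2)⁻¹) with hF'
  have hd : ∀ z : ℂ, z ≠ 0 → HasDerivAt F (F' z) z := by
    intro z hz
    have hP : HasDerivAt (fun w : ℂ => P.eval w) (P.derivative.eval z) z := P.hasDerivAt z
    have hQi : HasDerivAt (fun w : ℂ => Q.eval w⁻¹)
        (Q.derivative.eval z⁻¹ * (-(z^2)⁻¹)) z :=
      HasDerivAt.comp z (Q.hasDerivAt z⁻¹) (hasDerivAt_inv hz)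
    have hu : HasDerivAt (fun w : ℂ => (s:ℂ) * (w + w⁻¹)) ((s:ℂ) * (1 + -(z^2)⁻¹)) z :=
      HasDerivAt.const_mul _ ((hasDerivAt_id z).add (hasDerivAt_inv hz))
    have hE : HasDerivAt (EE s) (EE s z * ((s:ℂ) * (1 + -(z^2)⁻¹))) z := hu.cexp
    exact (((hP.mul hQi).mul hE).mul (hasDerivAt_inv hz))
  have hc : ContinuousOn F' {(0:ℂ)}ᶜ := by
    have hinv : ContinuousOn (fun z : ℂ => z⁻¹) {(0:ℂ)}ᶜ :=
      continuousOn_inv₀.mono (by intro z hz; simpa using hz)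
    have hinv2 : ContinuousOn (fun z : ℂ => (z^2)⁻¹) {(0:ℂ)}ᶜ := by
      apply ContinuousOn.inv₀ (continuous_pow 2).continuousOn
      intro z hz; exact pow_ne_zero _ (by simpa using hz)
    have hQc : ContinuousOn (fun z : ℂ => Q.eval z⁻¹) {(0:ℂ)}ᶜ :=
      Q.continuous_aeval.comp_continuousOn hinv
    have hQd : ContinuousOn (fun z : ℂ => Q.derivative.eval z⁻¹) {(0:ℂ)}ᶜ :=
      Q.derivative.continuous_aeval.comp_continuousOn hinv
    exact ((((P.derivative.continuous_aeval.continuousOn.mul hQc |>.add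
      (P.continuous_aeval.continuousOn.mul (hQd.mul hinv2.neg))).mul (contOn_EE s)).add
      ((P.continuous_aeval.continuousOn.mul hQc).mul
        ((contOn_EE s).mul (continuousOn_const.mul (continuousOn_const.add hinv2.neg))))).mul
        hinv).add
      (((P.continuous_aeval.continuousOn.mul hQc).mul (contOn_EE s)).mul hinv2.neg)
  have hzero := circleIntegral_deriv_eq_zero hd hc
  have hsplit : (∮ z in C(0,1), F' z) = ∮ z in C(0,1),
      (P.derivative.eval z * Q.eval z⁻¹ * EE s z / z
      + ((-1 : ℂ) * ((Polynomial.X^2 * Q.derivative).eval z⁻¹ * P.eval z * EE s z / z)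
      + ((s : ℂ) * (P.eval z * Q.eval z⁻¹ * EE s z / z)
      + ((-(s : ℂ)) * ((Polynomial.X^2 * Q).eval z⁻¹ * P.eval z * EE s z / z)
      + (-1 : ℂ) * ((Polynomial.X * Q).eval z⁻¹ * P.eval z * EE s z / z))))) := by
    congr 1
    funext z
    simp only [hF', Polynomial.eval_mul, Polynomial.eval_X, Polynomial.eval_pow]
    rw [show (z^2)⁻¹ = z⁻¹ * z⁻¹ by rw [sq, mul_inv]]
    simp only [div_eq_mul_inv, sq]
    ring
  rw [hsplit] at hzero
  have i1 : CircleIntegrable (fun z : ℂ =>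
      P.derivative.eval z * Q.eval z⁻¹ * EE s z / z) 0 1 := Jf_integrable s _ Q
  have i2 : CircleIntegrable (fun z : ℂ =>
      (-1 : ℂ) * ((Polynomial.X^2 * Q.derivative).eval z⁻¹ * P.eval z * EE s z / z)) 0 1 :=
    CircleIntegrable.cmul _ (circleIntegrable_of_contOn (contOn_Jf_flip s _ P))
  have i3 : CircleIntegrable (fun z : ℂ =>
      (s : ℂ) * (P.eval z * Q.eval z⁻¹ * EE s z / z)) 0 1 :=
    CircleIntegrable.cmul _ (Jf_integrable s P Q)
  have i4 : CircleIntegrable (fun z : ℂ =>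
      (-(s : ℂ)) * ((Polynomial.X^2 * Q).eval z⁻¹ * P.eval z * EE s z / z)) 0 1 :=
    CircleIntegrable.cmul _ (circleIntegrable_of_contOn (contOn_Jf_flip s _ P))
  have i5 : CircleIntegrable (fun z : ℂ =>
      (-1 : ℂ) * ((Polynomial.X * Q).eval z⁻¹ * P.eval z * EE s z / z)) 0 1 :=
    CircleIntegrable.cmul _ (circleIntegrable_of_contOn (contOn_Jf_flip s _ P))
  rw [cI_add5 i1 i2 i3 i4 i5, cI_cmul, cI_cmul, cI_cmul, cI_cmul,
    Jf_flip_integral s (Polynomial.X^2 * Q.derivative) P,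
    Jf_flip_integral s (Polynomial.X^2 * Q) P,
    Jf_flip_integral s (Polynomial.X * Q) P] at hzero
  have e1 : (∮ z in C(0,1), P.derivative.eval z * Q.eval z⁻¹ * EE s z / z)
      = Jf s P.derivative Q := rfl
  have e3 : (∮ z in C(0,1), P.eval z * Q.eval z⁻¹ * EE s z / z) = Jf s P Q := rfl
  rw [e1, e3] at hzero
  linear_combination hzero

lemma Jf_sub_left (s : ℝ) (f₁ f₂ g : Polynomial ℂ) :
    Jf s (f₁ - f₂) g = Jf s f₁ g - Jf s f₂ g := by
  have e : f₁ - f₂ = f₁ + Polynomial.C (-1 : ℂ) * f₂ := by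
    rw [map_neg, map_one]; ring
  rw [e, Jf_add_left, Jf_Cmul_left]; ring

lemma Jf_step (s : ℝ) (p : ℕ → Polynomial ℂ)
    (hmonic : ∀ n, (p n).Monic) (hdeg : ∀ n, (p n).natDegree = n)
    (horth : ∀ n m, n ≠ m → Jf s (p n) (p m) = 0)
    (h : ℕ → ℂ) (hh : ∀ n, h n = Jf s (p n) (p n))
    (j : ℕ) (q : Polynomial ℂ) (hq : q.natDegree ≤ j + 2) :
    Jf s q (p (j+1)) = q.coeff (j+2) * Jf s (Polynomial.X * p (j+1)) (p (j+1))
      + (q.coeff (j+1) - q.coeff (j+2) * (p (j+1)).coeff j) * h (j+1) := by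
  set c := q.coeff (j+2) with hc
  set r := q - Polynomial.C c * (Polynomial.X * p (j+1)) with hr
  have hXp : ∀ k, (Polynomial.X * p (j+1)).coeff (k+1) = (p (j+1)).coeff k := by
    intro k; exact Polynomial.coeff_X_mul _ _
  have hlead : (p (j+1)).coeff (j+1) = 1 := by
    have := (hmonic (j+1)).coeff_natDegree; rwa [hdeg] at this
  have hXpdeg : (Polynomial.C c * (Polynomial.X * p (j+1))).natDegree ≤ j + 2 := by
    apply le_trans (Polynomial.natDegree_mul_le)
    simp only [Polynomial.natDegree_C, zero_add]
    apply le_trans (Polynomial.natDegree_mul_le)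
    simp [Polynomial.natDegree_X, hdeg]
    omega
  have hr2 : r.natDegree ≤ j + 2 :=
    le_trans (Polynomial.natDegree_sub_le _ _) (by simp [hq, hXpdeg])
  have hrdeg : r.natDegree ≤ j + 1 := by
    rw [Polynomial.natDegree_le_iff_coeff_eq_zero]
    intro k hk
    rcases Nat.lt_or_ge (j+2) k with hk2 | hk2
    · exact Polynomial.coeff_eq_zero_of_natDegree_lt (lt_of_le_of_lt hr2 hk2)
    · have hkk : k = j + 2 := by omega
      subst hkk
      rw [hr, Polynomial.coeff_sub, Polynomial.coeff_C_mul, hXp (j+1), hlead, ← hc]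
      ring
  have hsplit : q = Polynomial.C c * (Polynomial.X * p (j+1)) + r := by rw [hr]; ring
  have hrcoeff : r.coeff (j+1) = q.coeff (j+1) - c * (p (j+1)).coeff j := by
    rw [hr, Polynomial.coeff_sub, Polynomial.coeff_C_mul, hXp j]
  conv_lhs => rw [hsplit]
  rw [Jf_add_left, Jf_Cmul_left,
    Jf_coeff s p hmonic hdeg horth h hh (j+1) (j+1) le_rfl r hrdeg, hrcoeff]
/-- For `n ≥ 2`: `((n+1)/s)(B_n − C_n) + h_n/h_{n−1} − 1 − C_{n+1}(B_n − C_n) + (B_n − C_n)² = 0`. -/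
theorem stmt_16 (s : ℝ) (hs : 0 < s)
    (p : ℕ → Polynomial ℂ)
    (hmonic : ∀ n, (p n).Monic)
    (hdeg : ∀ n, (p n).natDegree = n)
    (hreal : ∀ n k, ((p n).coeff k).im = 0)
    (hp0 : ∀ n, (p n).coeff 0 ≠ 0)
    (horth : ∀ n m, n ≠ m →
      (∮ z in C(0, 1), (p n).eval z * (p m).eval z⁻¹ *
        Complex.exp (s * (z + z⁻¹)) / z) = 0)
    (h : ℕ → ℂ)
    (hh : ∀ n, h n = ∮ z in C(0, 1), (p n).eval z * (p n).eval z⁻¹ *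
        Complex.exp (s * (z + z⁻¹)) / z)
    (hne : ∀ n, h n ≠ 0)
    (Bn Cn : ℕ → ℂ)
    (hB : ∀ n, Bn n = -((p (n + 1)).coeff 0 / (p n).coeff 0))
    (hC : ∀ n, 1 ≤ n → Cn n = Bn n * h n / h (n - 1))
    (hrec : ∀ n, 1 ≤ n →
      Polynomial.X * (p n + Polynomial.C (Cn n) * p (n - 1)) =
        p (n + 1) + Polynomial.C (Bn n) * p n)
    (n : ℕ) (hn : 2 ≤ n) :
    ((n : ℂ) + 1) / (s : ℂ) * (Bn n - Cn n) + h n / h (n - 1) - 1 -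
      Cn (n + 1) * (Bn n - Cn n) + (Bn n - Cn n) ^ 2 = 0 := by
  obtain ⟨m, rfl⟩ : ∃ m, n = m + 2 := ⟨n - 2, by omega⟩
  have horth' : ∀ a b, a ≠ b → Jf s (p a) (p b) = 0 := by
    intro a b hab
    have := horth a b hab
    simpa [Jf, EE] using this
  have hh' : ∀ a, h a = Jf s (p a) (p a) := by
    intro a
    have := hh a
    simpa [Jf, EE] using this
  have Jc := Jf_coeff s p hmonic hdeg horth' h hh'
  have Js := Jf_step s p hmonic hdeg horth' h hh'
  have hl : ∀ k, (p k).coeff k = 1 := by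
    intro k
    have := (hmonic k).coeff_natDegree
    rwa [hdeg] at this
  have htop : ∀ k j, k < j → (p k).coeff j = 0 := by
    intro k j hj
    exact Polynomial.coeff_eq_zero_of_natDegree_lt (by rw [hdeg]; exact hj)
  have hdXle : ∀ k, (Polynomial.X * p k).natDegree ≤ k + 1 := by
    intro k
    refine le_trans Polynomial.natDegree_mul_le ?_
    simp [Polynomial.natDegree_X, hdeg]
    omega
  -- rearranged recursions
  have hrec1 : Polynomial.X * p (m+1) = p (m+2) + Polynomial.C (Bn (m+1)) * p (m+1)
      - Polynomial.C (Cn (m+1)) * (Polynomial.X * p m) := by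
    have e := hrec (m+1) (by omega)
    have e2 : Polynomial.X * (p (m+1) + Polynomial.C (Cn (m+1)) * p m)
        = p (m+2) + Polynomial.C (Bn (m+1)) * p (m+1) := by
      simpa only [show m+1-1 = m by omega, show m+1+1 = m+2 by omega] using e
    linear_combination e2
  have hrec2 : Polynomial.X * p (m+2) = p (m+3) + Polynomial.C (Bn (m+2)) * p (m+2)
      - Polynomial.C (Cn (m+2)) * (Polynomial.X * p (m+1)) := by
    have e := hrec (m+2) (by omega)
    have e2 : Polynomial.X * (p (m+2) + Polynomial.C (Cn (m+2)) * p (m+1))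
        = p (m+3) + Polynomial.C (Bn (m+2)) * p (m+2) := by
      simpa only [show m+2-1 = m+1 by omega, show m+2+1 = m+3 by omega] using e
    linear_combination e2
  have hrec3 : Polynomial.X * p (m+3) = p (m+4) + Polynomial.C (Bn (m+3)) * p (m+3)
      - Polynomial.C (Cn (m+3)) * (Polynomial.X * p (m+2)) := by
    have e := hrec (m+3) (by omega)
    have e2 : Polynomial.X * (p (m+3) + Polynomial.C (Cn (m+3)) * p (m+2))
        = p (m+4) + Polynomial.C (Bn (m+3)) * p (m+3) := by
      simpa only [show m+3-1 = m+2 by omega, show m+3+1 = m+4 by omega] using e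
    linear_combination e2
  have hrec2X : Polynomial.X^2 * p (m+2) = Polynomial.X * p (m+3)
      + Polynomial.C (Bn (m+2)) * (Polynomial.X * p (m+2))
      - Polynomial.C (Cn (m+2)) * (Polynomial.X^2 * p (m+1)) := by
    have e := hrec (m+2) (by omega)
    have e2 : Polynomial.X * (p (m+2) + Polynomial.C (Cn (m+2)) * p (m+1))
        = p (m+3) + Polynomial.C (Bn (m+2)) * p (m+2) := by
      simpa only [show m+2-1 = m+1 by omega, show m+2+1 = m+3 by omega] using e
    linear_combination Polynomial.X * e2
  -- basic J values
  have cXm : (Polynomial.X * p m).coeff (m+1) = 1 := by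
    have e : (Polynomial.X * p m).coeff (m+1) = (p m).coeff m := Polynomial.coeff_X_mul _ _
    rw [hl m] at e; exact e
  have jXm_1 : Jf s (Polynomial.X * p m) (p (m+1)) = h (m+1) := by
    rw [Jc (m+1) (m+1) le_rfl _ (hdXle m), cXm]
    ring
  have jX1_1 : Jf s (Polynomial.X * p (m+1)) (p (m+1))
      = (Bn (m+1) - Cn (m+1)) * h (m+1) := by
    rw [hrec1, Jf_sub_left, Jf_add_left, Jf_Cmul_left, Jf_Cmul_left,
      horth' (m+2) (m+1) (by omega), ← hh' (m+1), jXm_1]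
    ring
  have cX1 : (Polynomial.X * p (m+1)).coeff (m+2) = 1 := by
    have e : (Polynomial.X * p (m+1)).coeff (m+2) = (p (m+1)).coeff (m+1) :=
      Polynomial.coeff_X_mul _ _
    rw [hl (m+1)] at e; exact e
  have jX1_2 : Jf s (Polynomial.X * p (m+1)) (p (m+2)) = h (m+2) := by
    rw [Jc (m+2) (m+2) le_rfl _ (le_trans (hdXle (m+1)) (by omega)), cX1]
    ring
  have jX2_2 : Jf s (Polynomial.X * p (m+2)) (p (m+2))
      = (Bn (m+2) - Cn (m+2)) * h (m+2) := by
    rw [hrec2, Jf_sub_left, Jf_add_left, Jf_Cmul_left, Jf_Cmul_left,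
      horth' (m+3) (m+2) (by omega), ← hh' (m+2), jX1_2]
    ring
  have jX3_2 : Jf s (Polynomial.X * p (m+3)) (p (m+2))
      = -Cn (m+3) * ((Bn (m+2) - Cn (m+2)) * h (m+2)) := by
    rw [hrec3, Jf_sub_left, Jf_add_left, Jf_Cmul_left, Jf_Cmul_left,
      horth' (m+4) (m+2) (by omega), horth' (m+3) (m+2) (by omega), jX2_2]
    ring
  have jX2_1 : Jf s (Polynomial.X * p (m+2)) (p (m+1))
      = -Cn (m+2) * ((Bn (m+1) - Cn (m+1)) * h (m+1)) := by
    rw [hrec2, Jf_sub_left, Jf_add_left, Jf_Cmul_left, Jf_Cmul_left,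
      horth' (m+3) (m+1) (by omega), horth' (m+2) (m+1) (by omega), jX1_1]
    ring

  -- Jf_step based values
  have hq1 : (Polynomial.X^2 * p (m+1)).natDegree ≤ m+1+2 := by
    refine le_trans Polynomial.natDegree_mul_le ?_
    rw [Polynomial.natDegree_X_pow, hdeg]
    omega
  have cA : (Polynomial.X^2 * p (m+1)).coeff (m+3) = 1 := by
    have e : (Polynomial.X^2 * p (m+1)).coeff (m+1+2) = (p (m+1)).coeff (m+1) :=
      Polynomial.coeff_X_pow_mul (p (m+1)) 2 (m+1)
    rw [hl (m+1)] at e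
    exact e
  have cB : (Polynomial.X^2 * p (m+1)).coeff (m+2) = (p (m+1)).coeff m :=
    Polynomial.coeff_X_pow_mul (p (m+1)) 2 m
  have jXX1_2 : Jf s (Polynomial.X^2 * p (m+1)) (p (m+2))
      = ((Bn (m+2) - Cn (m+2)) + (p (m+1)).coeff m - (p (m+2)).coeff (m+1)) * h (m+2) := by
    have e : Jf s (Polynomial.X^2 * p (m+1)) (p (m+2))
        = (Polynomial.X^2 * p (m+1)).coeff (m+3)
            * Jf s (Polynomial.X * p (m+2)) (p (m+2))
          + ((Polynomial.X^2 * p (m+1)).coeff (m+2)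
            - (Polynomial.X^2 * p (m+1)).coeff (m+3) * (p (m+2)).coeff (m+1)) * h (m+2) :=
      Js (m+1) _ hq1
    rw [cA, cB, jX2_2] at e
    rw [e]; ring
  have jXX2_2 : Jf s (Polynomial.X^2 * p (m+2)) (p (m+2))
      = -Cn (m+3) * ((Bn (m+2) - Cn (m+2)) * h (m+2))
        + Bn (m+2) * ((Bn (m+2) - Cn (m+2)) * h (m+2))
        - Cn (m+2) * (((Bn (m+2) - Cn (m+2)) + (p (m+1)).coeff m
            - (p (m+2)).coeff (m+1)) * h (m+2)) := by
    rw [hrec2X, Jf_sub_left, Jf_add_left, Jf_Cmul_left, Jf_Cmul_left, jX3_2, jX2_2, jXX1_2]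
  -- derivative coefficient facts
  have hderdeg : ((p (m+2)).derivative).natDegree ≤ m+1 := by
    have e := Polynomial.natDegree_derivative_le (p (m+2))
    rw [hdeg] at e
    omega
  have hder1deg : ((p (m+1)).derivative).natDegree ≤ m := by
    have e := Polynomial.natDegree_derivative_le (p (m+1))
    rw [hdeg] at e
    omega
  have cd1 : ((p (m+2)).derivative).coeff (m+1) = ((m:ℂ)+2) := by
    rw [Polynomial.coeff_derivative]
    have e : (p (m+2)).coeff (m+1+1) = 1 := hl (m+2)
    rw [e]
    push_cast; ring
  have cd0 : ((p (m+2)).derivative).coeff m = (p (m+2)).coeff (m+1) * ((m:ℂ)+1) := by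
    rw [Polynomial.coeff_derivative]
  have cdtop : ((p (m+2)).derivative).coeff (m+2) = 0 := by
    rw [Polynomial.coeff_derivative]
    have e : (p (m+2)).coeff (m+2+1) = 0 := htop (m+2) (m+3) (by omega)
    rw [e]; ring
  have jd2 : Jf s ((p (m+2)).derivative) (p (m+2)) = 0 := by
    rw [Jc (m+2) (m+2) le_rfl _ (le_trans hderdeg (by omega)), cdtop]
    ring
  have cE : (Polynomial.X^2 * (p (m+2)).derivative).coeff (m+3) = ((m:ℂ)+2) := by
    have e : (Polynomial.X^2 * (p (m+2)).derivative).coeff (m+1+2)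
        = ((p (m+2)).derivative).coeff (m+1) :=
      Polynomial.coeff_X_pow_mul _ 2 (m+1)
    rw [cd1] at e
    exact e
  have cF : (Polynomial.X^2 * (p (m+2)).derivative).coeff (m+2)
      = (p (m+2)).coeff (m+1) * ((m:ℂ)+1) := by
    have e : (Polynomial.X^2 * (p (m+2)).derivative).coeff (m+2)
        = ((p (m+2)).derivative).coeff m :=
      Polynomial.coeff_X_pow_mul _ 2 m
    rw [cd0] at e
    exact e
  have jXXd2 : Jf s (Polynomial.X^2 * (p (m+2)).derivative) (p (m+2))
      = (((m:ℂ)+2) * (Bn (m+2) - Cn (m+2)) - (p (m+2)).coeff (m+1)) * h (m+2) := by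
    have hq : (Polynomial.X^2 * (p (m+2)).derivative).natDegree ≤ m+1+2 := by
      refine le_trans Polynomial.natDegree_mul_le ?_
      rw [Polynomial.natDegree_X_pow]
      omega
    have e : Jf s (Polynomial.X^2 * (p (m+2)).derivative) (p (m+2))
        = (Polynomial.X^2 * (p (m+2)).derivative).coeff (m+3)
            * Jf s (Polynomial.X * p (m+2)) (p (m+2))
          + ((Polynomial.X^2 * (p (m+2)).derivative).coeff (m+2)
            - (Polynomial.X^2 * (p (m+2)).derivative).coeff (m+3)
              * (p (m+2)).coeff (m+1)) * h (m+2) :=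
      Js (m+1) _ hq
    rw [cE, cF, jX2_2] at e
    rw [e]; ring
  have cG : (Polynomial.X * (p (m+2)).derivative).coeff (m+2) = ((m:ℂ)+2) := by
    have e : (Polynomial.X * (p (m+2)).derivative).coeff (m+1+1)
        = ((p (m+2)).derivative).coeff (m+1) := Polynomial.coeff_X_mul _ _
    rw [cd1] at e
    exact e
  have cH : (Polynomial.X * (p (m+2)).derivative).coeff (m+1)
      = (p (m+2)).coeff (m+1) * ((m:ℂ)+1) := by
    have e : (Polynomial.X * (p (m+2)).derivative).coeff (m+1)
        = ((p (m+2)).derivative).coeff m := Polynomial.coeff_X_mul _ _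
    rw [cd0] at e
    exact e
  have jXd2_1 : Jf s (Polynomial.X * (p (m+2)).derivative) (p (m+1))
      = (((m:ℂ)+2) * (Bn (m+1) - Cn (m+1))
        + (((m:ℂ)+1) * (p (m+2)).coeff (m+1) - ((m:ℂ)+2) * (p (m+1)).coeff m)) * h (m+1) := by
    have hq : (Polynomial.X * (p (m+2)).derivative).natDegree ≤ m+2 := by
      refine le_trans Polynomial.natDegree_mul_le ?_
      rw [Polynomial.natDegree_X]
      omega
    have e : Jf s (Polynomial.X * (p (m+2)).derivative) (p (m+1))
        = (Polynomial.X * (p (m+2)).derivative).coeff (m+2)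
            * Jf s (Polynomial.X * p (m+1)) (p (m+1))
          + ((Polynomial.X * (p (m+2)).derivative).coeff (m+1)
            - (Polynomial.X * (p (m+2)).derivative).coeff (m+2)
              * (p (m+1)).coeff m) * h (m+1) :=
      Js m _ hq
    rw [cG, cH, jX1_1] at e
    rw [e]; ring
  have jXd1_2 : Jf s (Polynomial.X * (p (m+1)).derivative) (p (m+2)) = 0 := by
    have hq : (Polynomial.X * (p (m+1)).derivative).natDegree ≤ m+2 := by
      refine le_trans Polynomial.natDegree_mul_le ?_
      rw [Polynomial.natDegree_X]
      omega
    rw [Jc (m+2) (m+2) le_rfl _ hq]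
    have e : (Polynomial.X * (p (m+1)).derivative).coeff (m+1+1)
        = ((p (m+1)).derivative).coeff (m+1) := Polynomial.coeff_X_mul _ _
    have e2 : ((p (m+1)).derivative).coeff (m+1) = 0 := by
      rw [Polynomial.coeff_derivative]
      have e3 : (p (m+1)).coeff (m+1+1) = 0 := htop (m+1) (m+2) (by omega)
      rw [e3]; ring
    rw [e2] at e
    have e4 : (Polynomial.X * (p (m+1)).derivative).coeff (m+2) = 0 := e
    rw [e4]; ring
  -- the two integral identities
  have EqA := Agen s (p (m+2)) (p (m+1))
  rw [jXd2_1, jXd1_2, jX2_1, jX1_2] at EqA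
  have EqD := Dgen s (p (m+2)) (p (m+2))
  rw [jd2, jXXd2, ← hh' (m+2), jXX2_2, jX2_2] at EqD
  have scalD : (0 - (((m:ℂ)+2) * (Bn (m+2) - Cn (m+2)) - (p (m+2)).coeff (m+1)) + (s:ℂ)
      - (s:ℂ) * (-Cn (m+3) * (Bn (m+2) - Cn (m+2)) + Bn (m+2) * (Bn (m+2) - Cn (m+2))
        - Cn (m+2) * ((Bn (m+2) - Cn (m+2)) + (p (m+1)).coeff m - (p (m+2)).coeff (m+1)))
      - (Bn (m+2) - Cn (m+2))) = 0 := by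
    have hfac : (0 - (((m:ℂ)+2) * (Bn (m+2) - Cn (m+2)) - (p (m+2)).coeff (m+1)) + (s:ℂ)
        - (s:ℂ) * (-Cn (m+3) * (Bn (m+2) - Cn (m+2)) + Bn (m+2) * (Bn (m+2) - Cn (m+2))
          - Cn (m+2) * ((Bn (m+2) - Cn (m+2)) + (p (m+1)).coeff m - (p (m+2)).coeff (m+1)))
        - (Bn (m+2) - Cn (m+2))) * h (m+2) = 0 := by
      linear_combination EqD
    exact (mul_eq_zero.mp hfac).resolve_right (hne (m+2))
  -- coefficient comparison in the recursion
  have hC1 : (p (m+1)).coeff m + Cn (m+1) = (p (m+2)).coeff (m+1) + Bn (m+1) := by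
    have e := hrec (m+1) (by omega)
    simp only [Nat.add_sub_cancel] at e
    have e2 := congrArg (fun q : Polynomial ℂ => q.coeff (m+1)) e
    simp only [Polynomial.coeff_X_mul, Polynomial.coeff_add, Polynomial.coeff_C_mul] at e2
    rw [hl m, hl (m+1)] at e2
    linear_combination e2
  -- final algebra
  have hs0 : (s:ℂ) ≠ 0 := Complex.ofReal_ne_zero.mpr (ne_of_gt hs)
  have hidx : m + 2 - 1 = m + 1 := rfl
  rw [hidx]
  have key : (((m:ℂ)+2)+1) * (Bn (m+2) - Cn (m+2)) * h (m+1) + (s:ℂ) * h (m+2)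
      - (s:ℂ) * h (m+1) - (s:ℂ) * Cn (m+3) * (Bn (m+2) - Cn (m+2)) * h (m+1)
      + (s:ℂ) * (Bn (m+2) - Cn (m+2))^2 * h (m+1) = 0 := by
    linear_combination (-1 : ℂ) * EqA - h (m+1) * scalD
      - ((((m:ℂ)+2) - (s:ℂ) * Cn (m+2)) * h (m+1)) * hC1
  have h1ne := hne (m+1)
  push_cast
  field_simp
  linear_combination key
end
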